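/- (Corollary 2, in its Ḣ^{−1} form, which bounds the 2-Wasserstein distance of the empirical measure to Lebesgue measure via Peyré's inequality) Let f : 𝕋 → ℝ be continuous, even, with mean value zero, with Fourier coefficients satisfying f̂(k) ≥ c·|k|^{−2} for all k ≠ 0 (for some fixed c > 0) and ∑_{k∈ℤ} f̂(k) < ∞. Then for any points x_1, …, x_n ∈ 𝕋, c · ∑_{k∈ℤ, k≠0} |k|^{−2} · |(1/n)·∑_{m=1}^{n} e^{2πik x_m}|² ≤ (1/n²) · ∑_{k=1}^{n} ∑_{ℓ=1}^{n} f(x_k − x_ℓ). -/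

import Mathlib

open MeasureTheory Filter

section Aux

open Complex

lemma fourier_sub_aux {T : ℝ} [hT : Fact (0 < T)] (m : ℤ) (a b : AddCircle T) :
    fourier m (a - b) = fourier m a * (starRingEnd ℂ) (fourier m b) := by
  rw [sub_eq_add_neg, fourier_apply, smul_add, AddCircle.toCircle_add,
    Circle.coe_mul, smul_neg, fourier_neg', ← fourier_apply]

end Aux

/-- Corollary 2, Ḣ^{−1} form: For continuous even mean-zero `f : 𝕋 → ℝ`
with summable Fourier coefficients satisfying `f̂(k) ≥ c·|k|^{−2}` for `k ≠ 0`, and any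
points `x_1, …, x_n ∈ 𝕋`,
`c · ∑_{k≠0} |k|^{−2} · |(1/n)·∑_{m=1}^{n} e^{2πik x_m}|² ≤ (1/n²)·∑_{k,ℓ=1}^{n} f(x_k − x_ℓ)`. -/
theorem sobolev_le_energy
    (f : UnitAddCircle → ℝ) (hf_cont : Continuous f)
    (hf_even : ∀ t : UnitAddCircle, f (-t) = f t)
    (hf_mean : (∫ t : UnitAddCircle, f t) = 0)
    (hf_sum : Summable fun k : ℤ => ‖fourierCoeff (fun t => (f t : ℂ)) k‖)
    (c : ℝ) (hc : 0 < c)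
    (hf_lb : ∀ k : ℤ, k ≠ 0 → c / (k : ℝ) ^ 2 ≤ (fourierCoeff (fun t => (f t : ℂ)) k).re)
    (n : ℕ) (x : ℕ → UnitAddCircle) :
    c * ∑' k : {k : ℤ // k ≠ 0}, (1 : ℝ) / ((k : ℤ) : ℝ) ^ 2 *
        ‖(1 / (n : ℂ)) * ∑ m ∈ Finset.Icc 1 n, fourier (k : ℤ) (x m)‖ ^ 2
      ≤ (1 / (n : ℝ) ^ 2) * ∑ k ∈ Finset.Icc 1 n, ∑ l ∈ Finset.Icc 1 n, f (x k - x l) := by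
  classical
  set F : ℤ → ℂ := fourierCoeff (fun t => (f t : ℂ)) with hF
  set S : ℤ → ℂ := fun m => ∑ j ∈ Finset.Icc 1 n, fourier m (x j) with hS
  set g : C(UnitAddCircle, ℂ) := ⟨fun t => (f t : ℂ), Complex.continuous_ofReal.comp hf_cont⟩
    with hg
  have hgF : fourierCoeff (⇑g) = F := rfl
  have hFsum : Summable F := Summable.of_norm hf_sum
  have hpt : ∀ y : UnitAddCircle, HasSum (fun m : ℤ => F m * fourier m y) ((f y : ℂ)) := by
    intro y
    have := has_pointwise_sum_fourier_series_of_summable (f := g) (hgF ▸ hFsum) y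
    simpa [hgF, smul_eq_mul, hg] using this
  have hF0 : F 0 = 0 := by
    have h1 : F 0 = ∫ t : UnitAddCircle, (f t : ℂ) ∂AddCircle.haarAddCircle := by
      simp [hF, fourierCoeff]
    have h2 : (volume : Measure UnitAddCircle) = AddCircle.haarAddCircle := by
      rw [AddCircle.volume_eq_smul_haarAddCircle]; simp
    have h3 : ∫ t : UnitAddCircle, (f t : ℂ) = ((∫ t : UnitAddCircle, f t : ℝ) : ℂ) :=
      integral_ofReal
    rw [h1, ← h2, h3, hf_mean, Complex.ofReal_zero]
  have hSbound : ∀ m : ℤ, ‖S m‖ ≤ n := by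
    intro m
    calc ‖S m‖ ≤ ∑ j ∈ Finset.Icc 1 n, ‖(fourier m (x j) : ℂ)‖ := norm_sum_le _ _
    _ = ∑ j ∈ Finset.Icc 1 n, 1 := by
        refine Finset.sum_congr rfl fun j _ => ?_
        rw [fourier_apply, Circle.norm_coe]
    _ ≤ n := by simp [Nat.card_Icc]
  -- key identity
  have hkey : ((∑ k ∈ Finset.Icc 1 n, ∑ l ∈ Finset.Icc 1 n, f (x k - x l) : ℝ) : ℂ)
      = ∑' m : ℤ, F m * (‖S m‖ ^ 2 : ℝ) := by
    push_cast
    calc (∑ k ∈ Finset.Icc 1 n, ∑ l ∈ Finset.Icc 1 n, ((f (x k - x l) : ℝ) : ℂ))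
        = ∑ k ∈ Finset.Icc 1 n, ∑ l ∈ Finset.Icc 1 n,
            ∑' m : ℤ, F m * fourier m (x k - x l) := by
          exact Finset.sum_congr rfl fun k _ => Finset.sum_congr rfl fun l _ =>
            ((hpt _).tsum_eq).symm
      _ = ∑ k ∈ Finset.Icc 1 n, ∑' m : ℤ, ∑ l ∈ Finset.Icc 1 n,
            F m * fourier m (x k - x l) := by
          exact Finset.sum_congr rfl fun k _ =>
            (Summable.tsum_finsetSum fun l _ => (hpt _).summable).symm
      _ = ∑' m : ℤ, ∑ k ∈ Finset.Icc 1 n, ∑ l ∈ Finset.Icc 1 n,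
            F m * fourier m (x k - x l) := by
          exact (Summable.tsum_finsetSum fun k _ => summable_sum fun l _ => (hpt _).summable).symm
      _ = ∑' m : ℤ, F m * ((‖S m‖ : ℂ) ^ 2) := by
          refine tsum_congr fun m => ?_
          have h3 : ∑ k ∈ Finset.Icc 1 n, ∑ l ∈ Finset.Icc 1 n, F m * fourier m (x k - x l)
              = F m * (S m * (starRingEnd ℂ) (S m)) := by
            simp only [hS, map_sum, fourier_sub_aux, Finset.mul_sum, Finset.sum_mul]
            rw [Finset.sum_comm]
          rw [h3, Complex.mul_conj']
  -- real part
  set r : ℤ → ℝ := fun m => (F m).re * ‖S m‖ ^ 2 with hr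
  have hrsummable : Summable r := by
    refine Summable.of_norm (Summable.of_nonneg_of_le (fun m => norm_nonneg _)
      (fun m => ?_) (hf_sum.mul_right ((n : ℝ) ^ 2)))
    simp only [hr, Real.norm_eq_abs, abs_mul, abs_pow, abs_norm]
    have h1 : |(F m).re| ≤ ‖F m‖ := by
      exact Complex.abs_re_le_norm _
    have h2 : ‖S m‖ ^ 2 ≤ (n : ℝ) ^ 2 := by
      have := hSbound m
      have h0 : (0:ℝ) ≤ ‖S m‖ := norm_nonneg _
      nlinarith
    exact mul_le_mul h1 h2 (by positivity) (norm_nonneg _)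
  -- equality of real double sum with tsum of real parts
  have hreal : (∑ k ∈ Finset.Icc 1 n, ∑ l ∈ Finset.Icc 1 n, f (x k - x l))
      = ∑' m : ℤ, r m := by
    have hsumC : Summable (fun m : ℤ => F m * (‖S m‖ ^ 2 : ℝ)) := by
      apply Summable.of_norm
      refine Summable.of_nonneg_of_le (fun m => norm_nonneg _) (fun m => ?_)
        (hf_sum.mul_right ((n : ℝ) ^ 2))
      rw [norm_mul]
      have h2 : ‖((‖S m‖ ^ 2 : ℝ) : ℂ)‖ ≤ (n : ℝ) ^ 2 := by
        rw [Complex.norm_real, Real.norm_eq_abs, abs_pow, abs_norm]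
        have := hSbound m
        have h0 : (0:ℝ) ≤ ‖S m‖ := norm_nonneg _
        nlinarith
      exact mul_le_mul_of_nonneg_left h2 (norm_nonneg _)
    have := congrArg Complex.re hkey
    rw [Complex.ofReal_re, Complex.re_tsum hsumC] at this
    rw [this]
    refine tsum_congr fun m => ?_
    simp only [hr, Complex.mul_re, Complex.ofReal_re, Complex.ofReal_im, mul_zero, sub_zero]
  -- the lower bound function
  set q : ℤ → ℝ := fun m => c / (m : ℝ) ^ 2 * ‖S m‖ ^ 2 with hq
  have hq0 : ∀ m : ℤ, 0 ≤ q m := by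
    intro m
    apply mul_nonneg _ (by positivity)
    positivity
  have hqr : ∀ m : ℤ, q m ≤ r m := by
    intro m
    by_cases hm : m = 0
    · subst hm
      simp [hq, hr, hF0]
    · exact mul_le_mul_of_nonneg_right (hf_lb m hm) (by positivity)
  have hqsummable : Summable q := Summable.of_nonneg_of_le hq0 hqr hrsummable
  have hqsupp : Function.support q ⊆ {k : ℤ | k ≠ 0} := by
    intro m hm
    simp only [Set.mem_setOf_eq]
    intro h
    apply hm
    simp [hq, h]
  -- rewrite LHS
  have hnorm : ∀ k : ℤ, ‖(1 / (n : ℂ)) * S k‖ ^ 2 = (1 / (n:ℝ)^2) * ‖S k‖ ^ 2 := by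
    intro k
    rw [norm_mul, mul_pow, norm_div, norm_one, Complex.norm_natCast]
    ring
  have hLHS : c * ∑' k : {k : ℤ // k ≠ 0}, (1 : ℝ) / ((k : ℤ) : ℝ) ^ 2 *
        ‖(1 / (n : ℂ)) * ∑ m ∈ Finset.Icc 1 n, fourier (k : ℤ) (x m)‖ ^ 2
      = (1 / (n:ℝ)^2) * ∑' m : ℤ, q m := by
    rw [← tsum_subtype_eq_of_support_subset hqsupp]
    rw [← tsum_mul_left, ← tsum_mul_left]
    refine tsum_congr fun k => ?_
    have : (∑ m ∈ Finset.Icc 1 n, (fourier (k : ℤ)) (x m)) = S (k : ℤ) := rfl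
    rw [this, hnorm]
    simp only [hq]
    field_simp
  rw [hLHS, hreal]
  have hle : ∑' m : ℤ, q m ≤ ∑' m : ℤ, r m := Summable.tsum_le_tsum hqr hqsummable hrsummable
  apply mul_le_mul_of_nonneg_left hle (by positivity)
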